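/- Let n ≥ 2, let △ₙ ⊂ ℝⁿ be the convex hull of the stack-sorting iterates of τₙ = 2 3 ⋯ (n−1) n 1, let p = (p₁,…,pₙ) be any point of the affine hull of △ₙ, and let p′ = (p₁,…,p_{n−1},0). Let △ₙ′ be the image of △ₙ under the projection of ℝⁿ onto the hyperplane xₙ = 0 (setting the last coordinate of each point to 0). Then for every real λ ≥ 0, |λ(△ₙ − p) ∩ ℤⁿ| = |λ(△ₙ′ − p′) ∩ ℤⁿ|. -/
import Mathlib


open scoped Pointwise

/-- One pass of the stack-sorting algorithm: `ssAux stack input`, where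
`stack` holds the current stack contents, top first.  If the next input
entry exceeds the top of the stack, the top is popped to the output;
otherwise the entry is pushed; at the end the stack is popped entirely. -/
def ssAux : List ℕ → List ℕ → List ℕ
  | stack, [] => stack
  | [], x :: xs => ssAux [x] xs
  | t :: ts, x :: xs =>
    if t < x then t :: ssAux ts (x :: xs) else ssAux (x :: t :: ts) xs
termination_by stack inp => stack.length + 2 * inp.length

/-- The stack-sorting map `s`: one pass of the stack-sorting algorithm. -/
def stackSort (l : List ℕ) : List ℕ := ssAux [] l

/-- A list of naturals, viewed as a point of `ℝⁿ` (entry `i` is the `i`-th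
element of the list). -/
def toPoint (n : ℕ) (l : List ℕ) : Fin n → ℝ := fun i => (l.getD i 0 : ℝ)

/-- The permutation `τₙ = 2 3 ⋯ (n-1) n 1`, as a list. -/
def tauList (n : ℕ) : List ℕ := List.range' 2 (n - 1) ++ [1]

/-- The point of `ℝⁿ` corresponding to `τₙ = 2 3 ⋯ (n-1) n 1`. -/
noncomputable def tauPt (n : ℕ) : Fin n → ℝ := toPoint n (tauList n)

/-- The set `𝒮^{τₙ} = {s⁰(τₙ), s¹(τₙ), …, s^{n-1}(τₙ)} ⊆ ℝⁿ` of
stack-sorting iterates of `τₙ`, regarded as points of `ℝⁿ`. -/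
noncomputable def ssIterates (n : ℕ) : Set (Fin n → ℝ) :=
  Set.range fun i : Fin n => toPoint n (stackSort^[(i : ℕ)] (tauList n))

/-- The simplex `△ₙ`: the convex hull of the stack-sorting iterates of
`τₙ = 2 3 ⋯ (n-1) n 1`. -/
noncomputable def ssSimplex (n : ℕ) : Set (Fin n → ℝ) :=
  convexHull ℝ (ssIterates n)

/-- `x ∈ ℝⁿ` is a lattice (integer) point if all its coordinates are integers. -/
def IsLatticePt {n : ℕ} (x : Fin n → ℝ) : Prop := ∀ i, ∃ z : ℤ, x i = (z : ℝ)

/-- The number of lattice points of a subset of `ℝⁿ`. -/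
noncomputable def lattCount {n : ℕ} (S : Set (Fin n → ℝ)) : ℕ :=
  Set.ncard {x ∈ S | IsLatticePt x}

/-- Projection of `ℝⁿ` onto the hyperplane `xₙ = 0`: the last coordinate is
set to `0`. -/
def projLast (n : ℕ) (x : Fin n → ℝ) : Fin n → ℝ := fun i =>
  if (i : ℕ) = n - 1 then 0 else x i


/-- One pass of stack-sorting permutes `stack ++ input`. -/
theorem ssAux_perm : ∀ st l : List ℕ, (ssAux st l).Perm (st ++ l)
  | st, [] => by simp [ssAux]
  | [], x :: xs => by simpa [ssAux] using ssAux_perm [x] xs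
  | t :: ts, x :: xs => by
    rw [ssAux]
    split
    · exact List.Perm.cons t (ssAux_perm ts (x :: xs))
    · exact (ssAux_perm (x :: t :: ts) xs).trans
        (by simpa using (List.perm_middle (a := x) (l₁ := t :: ts) (l₂ := xs)).symm)
termination_by st l => st.length + 2 * l.length

theorem stackSort_perm (l : List ℕ) : (stackSort l).Perm l := by
  simpa [stackSort] using ssAux_perm [] l

theorem iterate_stackSort_perm (k : ℕ) (l : List ℕ) : (stackSort^[k] l).Perm l := by
  induction k with
  | zero => simp
  | succ k ih =>
    rw [Function.iterate_succ_apply']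
    exact (stackSort_perm _).trans ih

theorem sum_toPoint (n : ℕ) (l : List ℕ) (h : l.length = n) :
    ∑ i, toPoint n l i = (l.sum : ℝ) := by
  subst h
  have h1 : ∀ i : Fin l.length, toPoint l.length l i = (l.get i : ℝ) := by
    intro i
    simp [toPoint, List.getD_eq_getElem?_getD, List.getElem?_eq_getElem i.isLt]
  have h2 : (∑ i, l.get i) = l.sum := by
    conv_rhs => rw [← List.ofFn_get l]
    rw [List.sum_ofFn]
  calc ∑ i, toPoint l.length l i = ∑ i : Fin l.length, (l.get i : ℝ) := by
        exact Finset.sum_congr rfl fun i _ => h1 i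
    _ = ((∑ i, l.get i : ℕ) : ℝ) := by push_cast; rfl
    _ = (l.sum : ℝ) := by rw [h2]

theorem sum_exists_int (s : Finset (Fin n)) (f : Fin n → ℝ)
    (hf : ∀ j ∈ s, ∃ z : ℤ, f j = (z : ℝ)) : ∃ z : ℤ, ∑ j ∈ s, f j = (z : ℝ) := by
  classical
  induction s using Finset.induction_on with
  | empty => exact ⟨0, by simp⟩
  | @insert a s hx ih =>
    obtain ⟨z1, hz1⟩ := hf a (Finset.mem_insert_self a s)
    obtain ⟨z2, hz2⟩ := ih fun j hj => hf j (Finset.mem_insert_of_mem hj)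
    exact ⟨z1 + z2, by rw [Finset.sum_insert hx, hz1, hz2]; push_cast; ring⟩


/-- Let `n ≥ 2`, let `p` be any point of the affine hull
of `△ₙ`, let `p′` be `p` with last coordinate replaced by `0`, and let
`△ₙ′` be the projection of `△ₙ` onto the hyperplane `xₙ = 0`.  Then for
every real `λ ≥ 0`, the dilates `λ(△ₙ - p)` and `λ(△ₙ′ - p′)` contain the
same number of integer points. -/
theorem ssSimplex_proj_lattice_count (n : ℕ) (hn : 2 ≤ n) (p : Fin n → ℝ)
    (hp : p ∈ affineSpan ℝ (ssSimplex n)) (lam : ℝ) (hlam : 0 ≤ lam) :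
    lattCount (lam • ((· - p) '' ssSimplex n)) =
    lattCount (lam • ((· - projLast n p) '' (projLast n '' ssSimplex n))) := by
  classical
  set c : ℝ := ((tauList n).sum : ℝ) with hc
  have hlenTau : (tauList n).length = n := by
    simp only [tauList, List.length_append, List.length_range', List.length_singleton]
    omega
  -- every iterate point has coordinate sum c
  have hiter : ∀ v ∈ ssIterates n, ∑ i, v i = c := by
    rintro v ⟨k, rfl⟩
    rw [sum_toPoint n _ (((iterate_stackSort_perm _ _).length_eq).trans hlenTau)]
    have h := (iterate_stackSort_perm k (tauList n)).sum_eq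
    rw [hc]
    exact_mod_cast h
  -- the sum-c hyperplane is convex and affine-closed, so everything lands there
  have hconv : Convex ℝ {x : Fin n → ℝ | ∑ i, x i = c} := by
    intro x hx y hy a b ha hb hab
    simp only [Set.mem_setOf_eq] at hx hy ⊢
    simp only [Pi.add_apply, Pi.smul_apply, smul_eq_mul]
    rw [Finset.sum_add_distrib, ← Finset.mul_sum, ← Finset.mul_sum, hx, hy]
    nlinarith
  have hsimp : ∀ x ∈ ssSimplex n, ∑ i, x i = c := by
    intro x hx
    exact convexHull_min (fun v hv => hiter v hv) hconv hx
  have hpsum : ∑ i, p i = c := by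
    rw [ssSimplex, affineSpan_convexHull] at hp
    refine affineSpan_induction (p := fun q => ∑ i, q i = c) hp hiter ?_
    intro a u v w hu hv hw
    simp only [vsub_eq_sub, vadd_eq_add, Pi.add_apply, Pi.smul_apply, Pi.sub_apply,
      smul_eq_mul]
    rw [Finset.sum_add_distrib, ← Finset.mul_sum, Finset.sum_sub_distrib, hu, hv, hw]
    ring
  set S : Set (Fin n → ℝ) := lam • ((· - p) '' ssSimplex n) with hSdef
  have hS0 : ∀ x ∈ S, ∑ i, x i = 0 := by
    rintro x ⟨y, ⟨q, hq, rfl⟩, rfl⟩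
    simp only [Pi.smul_apply, Pi.sub_apply, smul_eq_mul]
    rw [← Finset.mul_sum, Finset.sum_sub_distrib, hsimp q hq, hpsum]
    ring
  set last : Fin n := ⟨n - 1, by omega⟩ with hlast
  have hlastval : ∀ i : Fin n, (i : ℕ) = n - 1 ↔ i = last := by
    intro i
    constructor
    · intro h; exact Fin.ext h
    · intro h; rw [h]
  -- projLast commutes with the affine operations
  have hlin : ∀ (a : ℝ) (u v : Fin n → ℝ),
      projLast n (a • (u - v)) = a • (projLast n u - projLast n v) := by
    intro a u v
    funext i
    by_cases h : (i : ℕ) = n - 1 <;> simp [projLast, h]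
  have hproj_eq : (lam • ((· - projLast n p) '' (projLast n '' ssSimplex n)))
      = projLast n '' S := by
    ext y
    constructor
    · rintro ⟨z, ⟨w, ⟨q, hq, rfl⟩, rfl⟩, rfl⟩
      exact ⟨lam • (q - p), ⟨q - p, ⟨q, hq, rfl⟩, rfl⟩, by simpa using hlin lam q p⟩
    · rintro ⟨x, ⟨z, ⟨q, hq, rfl⟩, rfl⟩, rfl⟩
      exact ⟨projLast n q - projLast n p, ⟨projLast n q, ⟨q, hq, rfl⟩, rfl⟩, by simpa using (hlin lam q p).symm⟩
  -- lattice recovery: a point of S whose projection is a lattice point is one itself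
  have hrecover : ∀ x ∈ S, IsLatticePt (projLast n x) → IsLatticePt x := by
    intro x hx hlp i
    by_cases hi : (i : ℕ) = n - 1
    · have hieq : i = last := Fin.ext hi
      have hsum : x last = -∑ j ∈ Finset.univ.erase last, x j := by
        have := hS0 x hx
        have h2 : x last + ∑ j ∈ Finset.univ.erase last, x j = ∑ j, x j :=
          Finset.add_sum_erase Finset.univ x (Finset.mem_univ last)
        rw [this] at h2
        linarith
      obtain ⟨z, hz⟩ := sum_exists_int (Finset.univ.erase last) x (by
        intro j hj
        have hjne : j ≠ last := Finset.ne_of_mem_erase hj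
        have hjval : (j : ℕ) ≠ n - 1 := fun h => hjne (Fin.ext h)
        obtain ⟨z, hz⟩ := hlp j
        refine ⟨z, ?_⟩
        rwa [projLast, if_neg hjval] at hz)
      exact ⟨-z, by rw [hieq, hsum, hz]; push_cast; ring⟩
    · obtain ⟨z, hz⟩ := hlp i
      rw [projLast, if_neg hi] at hz
      exact ⟨z, hz⟩
  have hpres : ∀ x : Fin n → ℝ, IsLatticePt x → IsLatticePt (projLast n x) := by
    intro x hx i
    by_cases hi : (i : ℕ) = n - 1
    · exact ⟨0, by simp [projLast, hi]⟩
    · obtain ⟨z, hz⟩ := hx i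
      exact ⟨z, by rwa [projLast, if_neg hi]⟩
  -- projLast is injective on S
  have hInj : Set.InjOn (projLast n) S := by
    intro x hx y hy hxy
    funext i
    by_cases hi : (i : ℕ) = n - 1
    · have hieq : i = last := Fin.ext hi
      have key : ∀ z ∈ S, z last = -∑ j ∈ Finset.univ.erase last, z j := by
        intro z hz
        have h2 : z last + ∑ j ∈ Finset.univ.erase last, z j = ∑ j, z j :=
          Finset.add_sum_erase Finset.univ z (Finset.mem_univ last)
        rw [hS0 z hz] at h2
        linarith
      have heq : ∀ j ∈ Finset.univ.erase last, x j = y j := by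
        intro j hj
        have hjne : j ≠ last := Finset.ne_of_mem_erase hj
        have hjval : (j : ℕ) ≠ n - 1 := fun h => hjne (Fin.ext h)
        have := congrFun hxy j
        rwa [projLast, projLast, if_neg hjval, if_neg hjval] at this
      rw [hieq, key x hx, key y hy, Finset.sum_congr rfl heq]
    · have := congrFun hxy i
      rwa [projLast, projLast, if_neg hi, if_neg hi] at this
  -- the lattice points correspond bijectively
  have hsetEq : {x ∈ projLast n '' S | IsLatticePt x}
      = projLast n '' {x ∈ S | IsLatticePt x} := by
    ext y
    constructor
    · rintro ⟨⟨x, hxS, rfl⟩, hy⟩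
      exact ⟨x, ⟨hxS, hrecover x hxS hy⟩, rfl⟩
    · rintro ⟨x, ⟨hxS, hxl⟩, rfl⟩
      exact ⟨⟨x, hxS, rfl⟩, hpres x hxl⟩
  rw [lattCount, lattCount, hproj_eq, hsetEq,
    Set.ncard_image_of_injOn (hInj.mono (Set.sep_subset _ _))]
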